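/- Let $S \subseteq A$ be rings with a split exact sequence of rings $0 \to J \to A \xrightarrow{\pi} S \to 0$ (i.e., $\pi$ is a ring homomorphism with $\pi|_S = \mathrm{id}_S$ and kernel $J$). If $A/S$ is a separable extension, then $J$ is an idempotent ideal, i.e., $J^2 = J$. -/

import Mathlib

/-- Separability of the ring extension `A / S`, for a subring `S` of `A`,
expressed via a Casimir (separability) element `e = ∑ᵢ xᵢ ⊗ yᵢ ∈ A ⊗_S A`:
`∑ᵢ xᵢ yᵢ = 1`, and `S`-centrality (`r • e = e • r` in `A ⊗_S A`) is encoded by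
evaluating against all `S`-balanced biadditive maps (these detect equality in
the tensor product `A ⊗_S A`). -/
def IsSeparableExtension {A : Type*} [Ring A] (S : Subring A) : Prop :=
  ∃ (n : ℕ) (x y : Fin n → A),
    (∑ i, x i * y i) = 1 ∧
    ∀ (Z : Type*) [AddCommGroup Z] (b : A →+ A →+ Z),
      (∀ (s : S) (a c : A), b (a * s) c = b a (s * c)) →
      ∀ r : A, (∑ i, b (r * x i) (y i)) = ∑ i, b (x i) (y i * r)

/-- If `0 → J → A → S → 0` is a split exact sequence of rings (`π : A → S` is a
ring homomorphism restricting to the identity on the subring `S`, with kernel `J`)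
and `A/S` is a separable extension, then `J` is an idempotent ideal: `J² = J`. -/
theorem biseparable_stmt0 {A : Type*} [Ring A] (S : Subring A)
    (π : A →+* S) (hπ : ∀ s : S, π (s : A) = s)
    (hsep : IsSeparableExtension S) :
    RingHom.ker π ^ 2 = RingHom.ker π := by
  obtain ⟨n, x, y, hxy, hcen⟩ := hsep
  set J : Ideal A := RingHom.ker π with hJ
  have hsq : J ^ 2 = J * J := by rw [Submodule.pow_succ, Submodule.pow_one]
  refine le_antisymm ?_ ?_
  · rw [hsq, Ideal.mul_le]
    intro a ha b hb
    rw [hJ, RingHom.mem_ker] at *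
    rw [map_mul, ha, zero_mul]
  · intro j hj
    have hπj : π j = 0 := hj
    by_contra hjn
    -- a character of A ⧸ J² not vanishing on the class of j
    have hmk : (Submodule.Quotient.mk j : A ⧸ (J ^ 2)) ≠ 0 := by
      rwa [ne_eq, Submodule.Quotient.mk_eq_zero]
    obtain ⟨c, hc⟩ :=
      CharacterModule.exists_character_apply_ne_zero_of_ne_zero hmk
    -- the balanced biadditive map bAux a c = [(a - π a) * c] in A / J²
    let bAux : A →+ A →+ (A ⧸ (J ^ 2)) :=
      { toFun := fun a =>
          { toFun := fun v => Submodule.Quotient.mk ((a - ((π a : S) : A)) * v)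
            map_zero' := by simp
            map_add' := fun v w => by
              rw [mul_add, Submodule.Quotient.mk_add] }
        map_zero' := by ext v; simp
        map_add' := fun a a' => by
          ext v
          simp only [AddMonoidHom.coe_mk, ZeroHom.coe_mk, AddMonoidHom.add_apply]
          rw [← Submodule.Quotient.mk_add]
          congr 1
          push_cast [map_add]
          noncomm_ring }
    -- lift the character to the appropriate universe
    let g : (A ⧸ (J ^ 2)) →+ ULift.{u_2} (AddCircle (1 : ℚ)) :=
      (AddEquiv.ulift.symm.toAddMonoidHom).comp c
    let b : A →+ A →+ ULift.{u_2} (AddCircle (1 : ℚ)) :=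
      { toFun := fun a => g.comp (bAux a)
        map_zero' := by ext v; simp
        map_add' := fun a a' => by ext v; simp }
    have hbal : ∀ (s : S) (a v : A), b (a * s) v = b a (s * v) := by
      intro s a v
      simp only [b, g, bAux, AddMonoidHom.coe_mk, ZeroHom.coe_mk, AddMonoidHom.coe_comp,
        Function.comp_apply]
      congr 2
      have h1 : π (a * (s : A)) = π a * s := by rw [map_mul, hπ]
      rw [h1]
      push_cast
      noncomm_ring
    have key := hcen (ULift.{u_2} (AddCircle (1 : ℚ))) b hbal j
    have hL : (∑ i, bAux (j * x i) (y i)) = Submodule.Quotient.mk j := by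
      have h : ∀ i, bAux (j * x i) (y i) = Submodule.Quotient.mk (j * (x i * y i)) := by
        intro i
        simp only [bAux, AddMonoidHom.coe_mk, ZeroHom.coe_mk]
        congr 1
        rw [map_mul, hπj, zero_mul]
        push_cast
        noncomm_ring
      rw [Finset.sum_congr rfl fun i _ => h i]
      simp only [← Submodule.mkQ_apply, ← map_sum]
      rw [← Finset.mul_sum, hxy, mul_one]
    have hR : (∑ i, bAux (x i) (y i * j)) = 0 := by
      refine Finset.sum_eq_zero fun i _ => ?_
      simp only [bAux, AddMonoidHom.coe_mk, ZeroHom.coe_mk]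
      rw [Submodule.Quotient.mk_eq_zero, hsq]
      refine Ideal.mul_mem_mul ?_ ?_
      · rw [hJ, RingHom.mem_ker, map_sub, hπ, sub_self]
      · rw [hJ, RingHom.mem_ker, map_mul, hπj, mul_zero]
    have hb1 : ∀ a v : A, b a v = g (bAux a v) := fun a v => rfl
    simp only [hb1, ← map_sum g, hL, hR, map_zero] at key
    apply hc
    have := congrArg AddEquiv.ulift key
    exact this
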